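/- Let G be the solution on [1,2] of the ODE G'' + l(s) G' = 1 with boundary values G(1) = a, G(2) = 0, where l(s) = (n-1+4A)(1/R) coth(s/R). Then there exists a = a(n, Λ, A) > 0 such that G' < 0 on [1,2]. -/

import Mathlib

open Real

noncomputable section

/-- let `G` solve `G'' + l(s)G' = 1` on `[1,2]` with
`l(s) = (n-1+4A)(1/R) coth(s/R)`, `G(1) = a`, `G(2) = 0`. Then there exists
`a = a(n,Λ,A) > 0` (here also depending on `R`, which plays the role of `1/Λ`) such
that any such solution satisfies `G' < 0` on `[1,2]`. -/
theorem exists_boundary_value_decreasing_solution (n : ℕ) (hn : 2 ≤ n)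
    (A R : ℝ) (hA : 0 < A) (hR : 0 < R) :
    ∃ a : ℝ, 0 < a ∧
      ∀ G G' G'' : ℝ → ℝ,
        (∀ s ∈ Set.Icc (1 : ℝ) 2, HasDerivAt G (G' s) s) →
        (∀ s ∈ Set.Icc (1 : ℝ) 2, HasDerivAt G' (G'' s) s) →
        (∀ s ∈ Set.Icc (1 : ℝ) 2,
          G'' s + (((n : ℝ) - 1 + 4 * A) * (1 / R) *
            (Real.cosh (s / R) / Real.sinh (s / R))) * G' s = 1) →
        G 1 = a → G 2 = 0 →
        ∀ s ∈ Set.Icc (1 : ℝ) 2, G' s < 0 := by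
  set c : ℝ := (n : ℝ) - 1 + 4 * A with hcdef
  have hn1 : (1 : ℝ) ≤ (n : ℝ) - 1 := by
    have : (2 : ℝ) ≤ (n : ℝ) := by exact_mod_cast hn
    linarith
  have hc : 0 < c := by simp only [hcdef]; nlinarith
  set μ : ℝ → ℝ := fun s => Real.sinh (s / R) ^ c with hμdef
  have hsinhpos : ∀ s ∈ Set.Icc (1 : ℝ) 2, 0 < Real.sinh (s / R) := by
    intro s hs
    exact Real.sinh_pos_iff.mpr (div_pos (by linarith [hs.1]) hR)
  have hμpos : ∀ s ∈ Set.Icc (1 : ℝ) 2, 0 < μ s := by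
    intro s hs
    exact Real.rpow_pos_of_pos (hsinhpos s hs) c
  have hμ1 : 0 < μ 1 := hμpos 1 (by norm_num)
  have hμ2 : 0 < μ 2 := hμpos 2 (by norm_num)
  have hμmono : ∀ s ∈ Set.Icc (1 : ℝ) 2, ∀ t ∈ Set.Icc (1 : ℝ) 2, s ≤ t → μ s ≤ μ t := by
    intro s hs t ht hst
    apply Real.rpow_le_rpow (le_of_lt (hsinhpos s hs))
    · exact Real.sinh_le_sinh.mpr (div_le_div_of_nonneg_right hst hR.le)
    · exact le_of_lt hc
  refine ⟨μ 2 / μ 1 + 1, by positivity, ?_⟩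
  intro G G' G'' hG hG' hode hG1 hG2 s hs
  set a : ℝ := μ 2 / μ 1 + 1 with hadef
  -- derivative of μ
  have hμderiv : ∀ s ∈ Set.Icc (1 : ℝ) 2,
      HasDerivAt μ (c * Real.sinh (s / R) ^ (c - 1) * (Real.cosh (s / R) * (1 / R))) s := by
    intro s hs
    have h1 : HasDerivAt (fun s : ℝ => s / R) (1 / R) s := by
      simpa using (hasDerivAt_id s).div_const R
    have h2 : HasDerivAt (fun s : ℝ => Real.sinh (s / R)) (Real.cosh (s / R) * (1 / R)) s := by
      have := (Real.hasDerivAt_sinh (s / R)).comp s h1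
      exact this
    have h3 := h2.rpow_const (p := c) (Or.inl (ne_of_gt (hsinhpos s hs)))
    convert h3 using 1
    ring
  -- h = μ * G' satisfies h' = μ on [1,2]
  have hh : ∀ s ∈ Set.Icc (1 : ℝ) 2,
      HasDerivAt (fun s => μ s * G' s) (μ s) s := by
    intro s hs
    have h4 := (hμderiv s hs).mul (hG' s hs)
    have hode' := hode s hs
    have hsinh := hsinhpos s hs
    have hrw : c * Real.sinh (s / R) ^ (c - 1) * (Real.cosh (s / R) * (1 / R)) * G' s
        + μ s * G'' s = μ s := by
      have hpow : Real.sinh (s / R) ^ (c - 1)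
          = Real.sinh (s / R) ^ c / Real.sinh (s / R) := by
        rw [Real.rpow_sub hsinh, Real.rpow_one]
      have hG'' : G'' s = 1 - c * (1 / R) * (Real.cosh (s / R) / Real.sinh (s / R)) * G' s := by
        linarith [hode']
      rw [hpow, hG'']
      simp only [hμdef]
      field_simp
      ring
    rw [← hrw]
    exact h4
  have hhcont : ContinuousOn (fun s => μ s * G' s) (Set.Icc (1 : ℝ) 2) := by
    intro x hx
    exact ((hh x hx).continuousAt).continuousWithinAt
  -- h is monotone on [1,2]
  have hhmono : MonotoneOn (fun s => μ s * G' s) (Set.Icc (1 : ℝ) 2) := by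
    apply monotoneOn_of_deriv_nonneg (convex_Icc 1 2) hhcont
    · intro x hx
      rw [interior_Icc] at hx
      exact ((hh x (Set.mem_Icc_of_Ioo hx)).differentiableAt).differentiableWithinAt
    · intro x hx
      rw [interior_Icc] at hx
      rw [(hh x (Set.mem_Icc_of_Ioo hx)).deriv]
      exact le_of_lt (hμpos x (Set.mem_Icc_of_Ioo hx))
  -- MVT: ∃ t ∈ (1,2), G' t = -a
  have hGcont : ContinuousOn G (Set.Icc (1 : ℝ) 2) := by
    intro x hx
    exact ((hG x hx).continuousAt).continuousWithinAt
  obtain ⟨t, ht, hslope⟩ := exists_hasDerivAt_eq_slope G G' (by norm_num : (1:ℝ) < 2)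
    hGcont (fun x hx => hG x (Set.mem_Icc_of_Ioo hx))
  have ht' : t ∈ Set.Icc (1 : ℝ) 2 := Set.mem_Icc_of_Ioo ht
  have hG't : G' t = -a := by
    rw [hslope, hG1, hG2]; ring
  -- bound: h 2 - h t ≤ μ 2 * (2 - t)
  have hk : ∀ x ∈ Set.Icc t 2, HasDerivAt (fun s => μ 2 * s - μ s * G' s) (μ 2 - μ x) x := by
    intro x hx
    have hx' : x ∈ Set.Icc (1 : ℝ) 2 := ⟨le_trans ht.1.le hx.1, hx.2⟩
    have h := ((hasDerivAt_id x).const_mul (μ 2)).sub (hh x hx')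
    rw [mul_one] at h
    exact h
  have hkmono : MonotoneOn (fun s => μ 2 * s - μ s * G' s) (Set.Icc t 2) := by
    apply monotoneOn_of_deriv_nonneg (convex_Icc t 2)
    · intro x hx
      exact ((hk x hx).continuousAt).continuousWithinAt
    · intro x hx
      rw [interior_Icc] at hx
      exact ((hk x (Set.mem_Icc_of_Ioo hx)).differentiableAt).differentiableWithinAt
    · intro x hx
      rw [interior_Icc] at hx
      have hx' : x ∈ Set.Icc (1 : ℝ) 2 := ⟨le_trans ht.1.le hx.1.le, hx.2.le⟩
      rw [(hk x (Set.mem_Icc_of_Ioo hx)).deriv]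
      have := hμmono x hx' 2 (by norm_num) hx.2.le
      linarith
  have hkey : μ 2 * t - μ t * G' t ≤ μ 2 * 2 - μ 2 * G' 2 :=
    hkmono (Set.left_mem_Icc.mpr ht.2.le) (Set.right_mem_Icc.mpr ht.2.le) ht.2.le
  -- h 2 ≤ μ 2 * (2 - t) + μ t * G' t ≤ μ 2 - a * μ 1
  have hμt1 : μ 1 ≤ μ t := hμmono 1 (by norm_num) t ht' ht.1.le
  have hh2 : μ 2 * G' 2 ≤ μ 2 - a * μ 1 := by
    have h1 : μ 2 * G' 2 ≤ μ 2 * (2 - t) + μ t * G' t := by linarith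
    have h2 : μ 2 * (2 - t) ≤ μ 2 := by nlinarith [ht.1]
    have h3 : μ t * G' t ≤ -a * μ 1 := by
      rw [hG't]
      have ha : 0 < a := by positivity
      nlinarith
    linarith
  have hneg : μ s * G' s < 0 := by
    have h5 : μ s * G' s ≤ μ 2 * G' 2 :=
      hhmono hs (Set.right_mem_Icc.mpr (by norm_num)) hs.2
    have haμ : a * μ 1 = μ 2 + μ 1 := by
      rw [hadef]; field_simp
    linarith
  nlinarith [hμpos s hs, hneg]
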